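/- Let n ≥ 2, m > 0 and define a_i(b) = e^{m b_i}/Σ_j e^{m b_j} and p_i(b) = b_i - (Σ_j e^{m b_j})/(m e^{m b_i}) · ln( (Σ_j e^{m b_j}) / (1 + Σ_{j≠i} e^{m b_j}) ). Then a_i(b_i, b_{-i}) · p_i(b_i, b_{-i}) = ∫_0^{b_i} t · (∂/∂t) a_i(t, b_{-i}) dt, i.e. the payment rule is the Myerson payment associated with the soft-max allocation. -/

import Mathlib

set_option maxHeartbeats 1000000


open Finset

/-- Soft-max (logit) allocation rule with parameter `m`. -/
noncomputable def softAlloc (n : ℕ) (m : ℝ) (b : Fin n → ℝ) (i : Fin n) : ℝ :=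
  Real.exp (m * b i) / ∑ j, Real.exp (m * b j)

/-- Soft second-price payment rule with parameter `m`. -/
noncomputable def softPay (n : ℕ) (m : ℝ) (b : Fin n → ℝ) (i : Fin n) : ℝ :=
  b i - (∑ j, Real.exp (m * b j)) / (m * Real.exp (m * b i)) *
    Real.log ((∑ j, Real.exp (m * b j)) /
      (1 + ∑ j ∈ Finset.univ.erase i, Real.exp (m * b j)))

theorem stmt1 (n : ℕ) (hn : 2 ≤ n) (m : ℝ) (hm : 0 < m)
    (b : Fin n → ℝ) (hb : ∀ j, b j ∈ Set.Icc (0:ℝ) 1) (i : Fin n) :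
    softAlloc n m b i * softPay n m b i =
      ∫ t in (0:ℝ)..(b i),
        t * deriv (fun s : ℝ => softAlloc n m (Function.update b i s) i) t := by
  set S : ℝ := ∑ j ∈ Finset.univ.erase i, Real.exp (m * b j) with hSdef
  have hS : 0 ≤ S := Finset.sum_nonneg fun j _ => (Real.exp_pos _).le
  have hpos : ∀ x : ℝ, 0 < Real.exp (m * x) + S := fun x =>
    lt_of_lt_of_le (Real.exp_pos _) (le_add_of_nonneg_right hS)
  have h1S : (0:ℝ) < 1 + S := by linarith
  -- sum after update
  have hsum : ∀ s : ℝ, ∑ j, Real.exp (m * Function.update b i s j)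
      = Real.exp (m * s) + S := by
    intro s
    rw [← Finset.add_sum_erase _ _ (Finset.mem_univ i)]
    congr 1
    · rw [Function.update_self]
    · exact Finset.sum_congr rfl fun j hj => by
        rw [Function.update_of_ne (Finset.ne_of_mem_erase hj)]
  have hsumb : ∑ j, Real.exp (m * b j) = Real.exp (m * b i) + S := by
    have := hsum (b i)
    rwa [Function.update_eq_self] at this
  -- the one-variable allocation function
  set g : ℝ → ℝ := fun s => Real.exp (m * s) / (Real.exp (m * s) + S) with hgdef
  have hgfun : (fun s : ℝ => softAlloc n m (Function.update b i s) i) = g := by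
    funext s
    simp only [softAlloc, hsum s, Function.update_self, hgdef]
  set g' : ℝ → ℝ := fun x =>
    (m * Real.exp (m * x) * (Real.exp (m * x) + S)
      - Real.exp (m * x) * (m * Real.exp (m * x))) / (Real.exp (m * x) + S) ^ 2
    with hg'def
  have hexp : ∀ x : ℝ, HasDerivAt (fun t : ℝ => Real.exp (m * t))
      (m * Real.exp (m * x)) x := by
    intro x
    have h := ((hasDerivAt_id x).const_mul m).exp
    simpa [mul_comm] using h
  have hgderiv : ∀ x : ℝ, HasDerivAt g (g' x) x := by
    intro x
    have hden : HasDerivAt (fun t : ℝ => Real.exp (m * t) + S)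
        (m * Real.exp (m * x)) x := (hexp x).add_const S
    exact (hexp x).div hden (hpos x).ne'
  have hderiv_eq : deriv g = g' := funext fun x => (hgderiv x).deriv
  have hce : Continuous fun x : ℝ => Real.exp (m * x) :=
    Real.continuous_exp.comp (continuous_const.mul continuous_id)
  have hcontg : Continuous g :=
    Continuous.div hce (hce.add continuous_const) fun x => (hpos x).ne'
  have hcontg' : Continuous g' :=
    Continuous.div
      (((continuous_const.mul hce).mul (hce.add continuous_const)).sub
        (hce.mul (continuous_const.mul hce)))
      ((hce.add continuous_const).pow 2)
      (fun x => pow_ne_zero _ (hpos x).ne')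
  set B : ℝ := b i with hBdef
  -- integration by parts
  have hparts : ∫ t in (0:ℝ)..B, t * g' t
      = B * g B - 0 * g 0 - ∫ t in (0:ℝ)..B, 1 * g t := by
    apply intervalIntegral.integral_mul_deriv_eq_deriv_mul
      (u := fun x : ℝ => x) (u' := fun _ => (1:ℝ)) (v := g) (v' := g')
    · intro x _; exact hasDerivAt_id x
    · intro x _; exact hgderiv x
    · exact (continuous_const).intervalIntegrable _ _
    · exact hcontg'.intervalIntegrable _ _
  -- antiderivative of g
  have hF : ∀ x : ℝ, HasDerivAt (fun t : ℝ => (1/m) * Real.log (Real.exp (m*t) + S))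
      (g x) x := by
    intro x
    have hden : HasDerivAt (fun t : ℝ => Real.exp (m * t) + S)
        (m * Real.exp (m * x)) x := (hexp x).add_const S
    have hlog := hden.log (hpos x).ne'
    have := hlog.const_mul (1/m)
    refine this.congr_deriv ?_
    rw [hgdef]
    field_simp [hgdef]
  have hint : ∫ t in (0:ℝ)..B, g t
      = (1/m) * Real.log (Real.exp (m*B) + S) - (1/m) * Real.log (1 + S) := by
    have := intervalIntegral.integral_eq_sub_of_hasDerivAt
      (f := fun t : ℝ => (1/m) * Real.log (Real.exp (m*t) + S))
      (f' := g) (a := (0:ℝ)) (b := B)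
      (fun x _ => hF x) (hcontg.intervalIntegrable _ _)
    simpa using this
  rw [hgfun, hderiv_eq, hparts]
  simp only [one_mul, zero_mul, sub_zero, hint]
  -- final algebra
  simp only [softAlloc, softPay, hsumb, hgdef, ← hBdef, ← hSdef]
  rw [Real.log_div (hpos B).ne' h1S.ne']
  have he : Real.exp (m * B) ≠ 0 := (Real.exp_pos _).ne'
  field_simp
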